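/- Let ε : Fin K → ℤ and m : Fin K → Fin n → ℤ with all m_i^{(a)} ≥ 0 satisfy ∑_a ε(a) m_i^{(a)} m_j^{(a)} m_k^{(a)} = 0, ∑_a ε(a) m_i^{(a)} m_j^{(a)} = 0, and ∑_a ε(a) m_i^{(a)} = 0 for all i,j,k. Then h_i(x, pq; p) = h_i(x, q; p), where h_i(x,q;p) = ∏_a ∏_{l=0}^{m_i^{(a)}-1} θ(q^l ∏_k x_k^{m_k^{(a)}}; p)^{ε(a)}. -/

import Mathlib

open Complex Finset
open Filter

/-- The theta function `θ(z;p) = (z;p)_∞ (p z⁻¹;p)_∞`. -/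
noncomputable def theta (p z : ℂ) : ℂ :=
  (∏' k : ℕ, (1 - z * p ^ k)) * (∏' k : ℕ, (1 - p ^ (k + 1) * z⁻¹))

lemma multipliable_aux {p : ℂ} (hp : ‖p‖ < 1) (w : ℂ) :
    Multipliable (fun k : ℕ => 1 - w * p ^ k) := by
  by_cases h : ∀ k : ℕ, (1 : ℂ) - w * p ^ k ≠ 0
  · have hs : Summable (fun k : ℕ => Complex.log (1 - w * p ^ k)) := by
      have hgeo : Summable (fun k : ℕ => (3/2 : ℝ) * (‖w‖ * ‖p‖ ^ k)) :=
        ((summable_geometric_of_lt_one (norm_nonneg p) hp).mul_left _).mul_left _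
      apply Summable.of_norm_bounded_eventually_nat hgeo
      have htend : Tendsto (fun k : ℕ => ‖w‖ * ‖p‖ ^ k) atTop (nhds 0) := by
        simpa using (tendsto_pow_atTop_nhds_zero_of_lt_one (norm_nonneg p) hp).const_mul
          (‖w‖)
      have hev : ∀ᶠ k : ℕ in atTop, ‖w‖ * ‖p‖ ^ k ≤ 1/2 :=
        htend.eventually_le_const (by norm_num)
      filter_upwards [hev] with k hk
      have hnorm : ‖-(w * p ^ k)‖ ≤ 1/2 := by
        simpa [norm_mul, norm_pow] using hk
      have h1 : (1 : ℂ) - w * p ^ k = 1 + -(w * p ^ k) := by ring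
      rw [h1]
      calc ‖Complex.log (1 + -(w * p ^ k))‖ ≤ (3/2) * ‖-(w * p ^ k)‖ :=
            Complex.norm_log_one_add_half_le_self hnorm
        _ = 3/2 * (‖w‖ * ‖p‖ ^ k) := by
            simp [norm_mul, norm_pow]
    exact Complex.multipliable_of_summable_log hs
  · push_neg at h
    obtain ⟨k0, hk0⟩ := h
    refine ⟨0, ?_⟩
    have hev : ∀ᶠ s : Finset ℕ in atTop, (∏ i ∈ s, (1 - w * p ^ i)) = 0 := by
      filter_upwards [eventually_ge_atTop ({k0} : Finset ℕ)] with s hs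
      exact Finset.prod_eq_zero (Finset.singleton_subset_iff.mp hs) hk0
    exact Tendsto.congr' (hev.mono fun s hs => hs.symm) tendsto_const_nhds

lemma theta_p_mul {p : ℂ} (hp : ‖p‖ < 1) (hp0 : p ≠ 0) {z : ℂ} (hz : z ≠ 0) :
    theta p (p * z) = -z⁻¹ * theta p z := by
  have MA' : Multipliable (fun k : ℕ => 1 - z * p ^ (k + 1)) :=
    (multipliable_aux hp (z * p)).congr fun k => by ring
  have MB' : Multipliable (fun k : ℕ => 1 - z⁻¹ * p ^ (k + 1)) :=
    (multipliable_aux hp (z⁻¹ * p)).congr fun k => by ring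
  have hA : (∏' k : ℕ, (1 - z * p ^ k)) = (1 - z) * ∏' k : ℕ, (1 - (p * z) * p ^ k) := by
    rw [tprod_eq_zero_mul' (f := fun k : ℕ => 1 - z * p ^ k) MA']
    congr 1
    · simp
    · exact tprod_congr fun k => by ring
  have hB : (∏' k : ℕ, (1 - p ^ (k + 1) * (p * z)⁻¹))
      = (1 - z⁻¹) * ∏' k : ℕ, (1 - p ^ (k + 1) * z⁻¹) := by
    have e1 : (∏' k : ℕ, (1 - p ^ (k + 1) * (p * z)⁻¹)) = ∏' k : ℕ, (1 - z⁻¹ * p ^ k) := by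
      refine tprod_congr fun k => ?_
      congr 1
      rw [pow_succ, mul_inv]
      field_simp
    rw [e1, tprod_eq_zero_mul' (f := fun k : ℕ => 1 - z⁻¹ * p ^ k) MB']
    congr 1
    · simp
    · exact tprod_congr fun k => by ring
  unfold theta
  rw [hB, hA]
  have key : (1 : ℂ) - z⁻¹ = -z⁻¹ * (1 - z) := by
    field_simp
    ring
  set a := ∏' k : ℕ, (1 - (p * z) * p ^ k)
  set b := ∏' k : ℕ, (1 - p ^ (k + 1) * z⁻¹)
  linear_combination a * b * key

lemma theta_p_pow {p : ℂ} (hp : ‖p‖ < 1) (hp0 : p ≠ 0) {w : ℂ} (hw : w ≠ 0) (l : ℕ) :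
    theta p (p ^ l * w) = (∏ j ∈ Finset.range l, (-(p ^ j * w)⁻¹)) * theta p w := by
  induction l with
  | zero => simp
  | succ l ih =>
    have h1 : p ^ (l + 1) * w = p * (p ^ l * w) := by ring
    rw [h1, theta_p_mul hp hp0 (mul_ne_zero (pow_ne_zero _ hp0) hw), ih,
      Finset.prod_range_succ]
    ring

lemma zpow_finset_sum {u : ℂ} (hu : u ≠ 0) {α : Type*} (s : Finset α) (f : α → ℤ) :
    u ^ (∑ a ∈ s, f a) = ∏ a ∈ s, u ^ f a := by
  classical
  induction s using Finset.induction with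
  | empty => simp
  | insert _ _ h ih => rw [Finset.sum_insert h, Finset.prod_insert h, zpow_add₀ hu, ih]

lemma sum_id_int (M : ℕ) : 2 * ((∑ l ∈ Finset.range M, l : ℕ) : ℤ) = M * M - M := by
  induction M with
  | zero => simp
  | succ M ih =>
    rw [Finset.sum_range_succ]
    push_cast at ih ⊢
    linear_combination ih

lemma sum_sq_int (M : ℕ) :
    6 * ((∑ l ∈ Finset.range M, l * l : ℕ) : ℤ) = 2 * M * M * M - 3 * M * M + M := by
  induction M with
  | zero => simp
  | succ M ih =>
    rw [Finset.sum_range_succ]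
    push_cast at ih ⊢
    linear_combination ih

lemma sum_tri_int (M : ℕ) :
    6 * ((∑ l ∈ Finset.range M, ∑ j ∈ Finset.range l, j : ℕ) : ℤ)
      = M * M * M - 3 * M * M + 2 * M := by
  induction M with
  | zero => simp
  | succ M ih =>
    rw [Finset.sum_range_succ]
    have h := sum_id_int M
    push_cast at ih h ⊢
    linear_combination ih + 3 * h

/-- The `q`-certificate
`h_i(x,q;p) = ∏_a ∏_{l=0}^{m_i^{(a)}-1} θ(q^l ∏_k x_k^{m_k^{(a)}}; p)^{ε(a)}`. -/
noncomputable def certificate {K n : ℕ} (ε : Fin K → ℤ) (m : Fin K → Fin n → ℤ)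
    (i : Fin n) (p q : ℂ) (x : Fin n → ℂ) : ℂ :=
  ∏ a : Fin K,
    (∏ l ∈ Finset.range (m a i).toNat, theta p (q ^ l * ∏ k : Fin n, x k ^ m a k)) ^ ε a

/-- Rains–Spiridonov (the `q ↦ pq` half): under the diophantine conditions, the
certificate is invariant under `q ↦ p q`. -/
theorem certificate_p_elliptic_in_q (K n : ℕ) (ε : Fin K → ℤ) (m : Fin K → Fin n → ℤ)
    (hm : ∀ (a : Fin K) (k : Fin n), 0 ≤ m a k)
    (hcube : ∀ i j k : Fin n, ∑ a : Fin K, ε a * m a i * m a j * m a k = 0)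
    (hquad : ∀ i j : Fin n, ∑ a : Fin K, ε a * m a i * m a j = 0)
    (hlin : ∀ i : Fin n, ∑ a : Fin K, ε a * m a i = 0)
    (i : Fin n) (p q : ℂ) (hp : ‖p‖ < 1) (hp0 : p ≠ 0) (hq : q ≠ 0)
    (x : Fin n → ℂ) (hx : ∀ k, x k ≠ 0)
    (hθ : ∀ (a : Fin K) (l : ℕ),
      theta p (q ^ l * ∏ k : Fin n, x k ^ m a k) ≠ 0)
    (hθ' : ∀ (a : Fin K) (l : ℕ),
      theta p ((p * q) ^ l * ∏ k : Fin n, x k ^ m a k) ≠ 0) :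
    certificate ε m i p (p * q) x = certificate ε m i p q x := by
  classical
  have hX0 : ∀ a : Fin K, (∏ k : Fin n, x k ^ m a k) ≠ 0 :=
    fun a => Finset.prod_ne_zero_iff.mpr fun k _ => zpow_ne_zero _ (hx k)
  have hMcast : ∀ a : Fin K, (((m a i).toNat : ℤ)) = m a i :=
    fun a => Int.toNat_of_nonneg (hm a i)
  -- Step 1: quasiperiodicity applied to each theta factor
  have key : ∀ (a : Fin K) (l : ℕ),
      theta p ((p * q) ^ l * ∏ k : Fin n, x k ^ m a k)
        = ((-1 : ℂ) ^ l * (p⁻¹) ^ (∑ j ∈ Finset.range l, j) * (q⁻¹) ^ (l * l)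
            * ((∏ k : Fin n, x k ^ m a k)⁻¹) ^ l)
          * theta p (q ^ l * ∏ k : Fin n, x k ^ m a k) := by
    intro a l
    have h1 : (p * q) ^ l * ∏ k : Fin n, x k ^ m a k
        = p ^ l * (q ^ l * ∏ k : Fin n, x k ^ m a k) := by ring
    rw [h1, theta_p_pow hp hp0 (mul_ne_zero (pow_ne_zero _ hq) (hX0 a)) l]
    congr 1
    calc ∏ j ∈ Finset.range l, (-(p ^ j * (q ^ l * ∏ k : Fin n, x k ^ m a k))⁻¹)
        = ∏ j ∈ Finset.range l,
            ((-1 : ℂ) * ((p⁻¹) ^ j * ((q⁻¹) ^ l * (∏ k : Fin n, x k ^ m a k)⁻¹))) := by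
          refine Finset.prod_congr rfl fun j _ => ?_
          rw [mul_inv, mul_inv, inv_pow, inv_pow]
          ring
      _ = (-1 : ℂ) ^ l * (p⁻¹) ^ (∑ j ∈ Finset.range l, j) * (q⁻¹) ^ (l * l)
            * ((∏ k : Fin n, x k ^ m a k)⁻¹) ^ l := by
          rw [Finset.prod_mul_distrib, Finset.prod_mul_distrib, Finset.prod_mul_distrib,
            Finset.prod_const, Finset.prod_const, Finset.prod_const,
            Finset.prod_pow_eq_pow_sum, Finset.card_range, ← pow_mul]
          ring
  -- Step 2: pull the prefactors out of the certificate
  have step2 : certificate ε m i p (p * q) x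
      = (∏ a : Fin K,
          ((-1 : ℂ) ^ (∑ l ∈ Finset.range (m a i).toNat, l)
            * (p⁻¹) ^ (∑ l ∈ Finset.range (m a i).toNat, ∑ j ∈ Finset.range l, j)
            * (q⁻¹) ^ (∑ l ∈ Finset.range (m a i).toNat, l * l)
            * ((∏ k : Fin n, x k ^ m a k)⁻¹) ^ (∑ l ∈ Finset.range (m a i).toNat, l)) ^ ε a)
        * certificate ε m i p q x := by
    unfold certificate
    rw [← Finset.prod_mul_distrib]
    refine Finset.prod_congr rfl fun a _ => ?_
    rw [← mul_zpow]
    congr 1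
    calc ∏ l ∈ Finset.range (m a i).toNat, theta p ((p * q) ^ l * ∏ k : Fin n, x k ^ m a k)
        = ∏ l ∈ Finset.range (m a i).toNat,
            (((-1 : ℂ) ^ l * (p⁻¹) ^ (∑ j ∈ Finset.range l, j) * (q⁻¹) ^ (l * l)
              * ((∏ k : Fin n, x k ^ m a k)⁻¹) ^ l)
            * theta p (q ^ l * ∏ k : Fin n, x k ^ m a k)) :=
          Finset.prod_congr rfl fun l _ => key a l
      _ = _ := by
          rw [Finset.prod_mul_distrib, Finset.prod_mul_distrib, Finset.prod_mul_distrib,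
            Finset.prod_mul_distrib, Finset.prod_pow_eq_pow_sum, Finset.prod_pow_eq_pow_sum,
            Finset.prod_pow_eq_pow_sum, Finset.prod_pow_eq_pow_sum]
  -- The vanishing of the integer exponents
  have hT0 : ∑ a : Fin K, ((∑ l ∈ Finset.range (m a i).toNat, l : ℕ) : ℤ) * ε a = 0 := by
    have h2 : (2 : ℤ) * ∑ a : Fin K, ((∑ l ∈ Finset.range (m a i).toNat, l : ℕ) : ℤ) * ε a
        = ∑ a : Fin K, (ε a * m a i * m a i - ε a * m a i) := by
      rw [Finset.mul_sum]
      refine Finset.sum_congr rfl fun a _ => ?_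
      have h := sum_id_int (m a i).toNat
      rw [hMcast a] at h
      linear_combination ε a * h
    rw [Finset.sum_sub_distrib, hquad i i, hlin i, sub_zero] at h2
    exact (mul_eq_zero.mp h2).resolve_left (by norm_num)
  have hS0 : ∑ a : Fin K, ((∑ l ∈ Finset.range (m a i).toNat, l * l : ℕ) : ℤ) * ε a = 0 := by
    have h2 : (6 : ℤ) * ∑ a : Fin K, ((∑ l ∈ Finset.range (m a i).toNat, l * l : ℕ) : ℤ) * ε a
        = ∑ a : Fin K, (2 * (ε a * m a i * m a i * m a i) - 3 * (ε a * m a i * m a i)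
            + ε a * m a i) := by
      rw [Finset.mul_sum]
      refine Finset.sum_congr rfl fun a _ => ?_
      have h := sum_sq_int (m a i).toNat
      rw [hMcast a] at h
      linear_combination ε a * h
    rw [Finset.sum_add_distrib, Finset.sum_sub_distrib, ← Finset.mul_sum, ← Finset.mul_sum,
      hcube i i i, hquad i i, hlin i] at h2
    linarith
  have hU0 : ∑ a : Fin K,
      ((∑ l ∈ Finset.range (m a i).toNat, ∑ j ∈ Finset.range l, j : ℕ) : ℤ) * ε a = 0 := by
    have h2 : (6 : ℤ) * ∑ a : Fin K,
        ((∑ l ∈ Finset.range (m a i).toNat, ∑ j ∈ Finset.range l, j : ℕ) : ℤ) * ε a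
        = ∑ a : Fin K, (ε a * m a i * m a i * m a i - 3 * (ε a * m a i * m a i)
            + 2 * (ε a * m a i)) := by
      rw [Finset.mul_sum]
      refine Finset.sum_congr rfl fun a _ => ?_
      have h := sum_tri_int (m a i).toNat
      rw [hMcast a] at h
      linear_combination ε a * h
    rw [Finset.sum_add_distrib, Finset.sum_sub_distrib, ← Finset.mul_sum, ← Finset.mul_sum,
      hcube i i i, hquad i i, hlin i] at h2
    linarith
  have hE4 : ∀ k : Fin n, ∑ a : Fin K,
      m a k * (-(((∑ l ∈ Finset.range (m a i).toNat, l : ℕ) : ℤ) * ε a)) = 0 := by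
    intro k
    have h2 : (2 : ℤ) * ∑ a : Fin K,
        m a k * (-(((∑ l ∈ Finset.range (m a i).toNat, l : ℕ) : ℤ) * ε a))
        = ∑ a : Fin K, (ε a * m a i * m a k - ε a * m a i * m a i * m a k) := by
      rw [Finset.mul_sum]
      refine Finset.sum_congr rfl fun a _ => ?_
      have h := sum_id_int (m a i).toNat
      rw [hMcast a] at h
      linear_combination (-(m a k) * ε a) * h
    rw [Finset.sum_sub_distrib, hquad i k, hcube i i k, sub_zero] at h2
    exact (mul_eq_zero.mp h2).resolve_left (by norm_num)
  -- Step 3: the product of prefactors equals 1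
  have hone : (∏ a : Fin K,
      ((-1 : ℂ) ^ (∑ l ∈ Finset.range (m a i).toNat, l)
        * (p⁻¹) ^ (∑ l ∈ Finset.range (m a i).toNat, ∑ j ∈ Finset.range l, j)
        * (q⁻¹) ^ (∑ l ∈ Finset.range (m a i).toNat, l * l)
        * ((∏ k : Fin n, x k ^ m a k)⁻¹) ^ (∑ l ∈ Finset.range (m a i).toNat, l)) ^ ε a) = 1 := by
    have expand : ∀ a : Fin K,
        ((-1 : ℂ) ^ (∑ l ∈ Finset.range (m a i).toNat, l)
          * (p⁻¹) ^ (∑ l ∈ Finset.range (m a i).toNat, ∑ j ∈ Finset.range l, j)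
          * (q⁻¹) ^ (∑ l ∈ Finset.range (m a i).toNat, l * l)
          * ((∏ k : Fin n, x k ^ m a k)⁻¹) ^ (∑ l ∈ Finset.range (m a i).toNat, l)) ^ ε a
        = (-1 : ℂ) ^ (((∑ l ∈ Finset.range (m a i).toNat, l : ℕ) : ℤ) * ε a)
          * (p⁻¹) ^ (((∑ l ∈ Finset.range (m a i).toNat, ∑ j ∈ Finset.range l, j : ℕ) : ℤ) * ε a)
          * (q⁻¹) ^ (((∑ l ∈ Finset.range (m a i).toNat, l * l : ℕ) : ℤ) * ε a)
          * ∏ k : Fin n,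
              x k ^ (m a k * (-(((∑ l ∈ Finset.range (m a i).toNat, l : ℕ) : ℤ) * ε a))) := by
      intro a
      rw [mul_zpow, mul_zpow, mul_zpow]
      congr 1
      · congr 1
        · congr 1
          · rw [← zpow_natCast (-1 : ℂ), ← zpow_mul]
          · rw [← zpow_natCast (p⁻¹ : ℂ), ← zpow_mul]
        · rw [← zpow_natCast (q⁻¹ : ℂ), ← zpow_mul]
      · rw [← zpow_natCast ((∏ k : Fin n, x k ^ m a k)⁻¹), ← zpow_mul, inv_zpow, ← zpow_neg,
          ← Finset.prod_zpow]
        refine Finset.prod_congr rfl fun k _ => ?_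
        rw [← zpow_mul]
    calc (∏ a : Fin K,
        ((-1 : ℂ) ^ (∑ l ∈ Finset.range (m a i).toNat, l)
          * (p⁻¹) ^ (∑ l ∈ Finset.range (m a i).toNat, ∑ j ∈ Finset.range l, j)
          * (q⁻¹) ^ (∑ l ∈ Finset.range (m a i).toNat, l * l)
          * ((∏ k : Fin n, x k ^ m a k)⁻¹) ^ (∑ l ∈ Finset.range (m a i).toNat, l)) ^ ε a)
        = ∏ a : Fin K,
            ((-1 : ℂ) ^ (((∑ l ∈ Finset.range (m a i).toNat, l : ℕ) : ℤ) * ε a)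
            * (p⁻¹) ^ (((∑ l ∈ Finset.range (m a i).toNat, ∑ j ∈ Finset.range l, j : ℕ) : ℤ) * ε a)
            * (q⁻¹) ^ (((∑ l ∈ Finset.range (m a i).toNat, l * l : ℕ) : ℤ) * ε a)
            * ∏ k : Fin n,
                x k ^ (m a k * (-(((∑ l ∈ Finset.range (m a i).toNat, l : ℕ) : ℤ) * ε a)))) :=
          Finset.prod_congr rfl fun a _ => expand a
      _ = (-1 : ℂ) ^ (∑ a : Fin K, ((∑ l ∈ Finset.range (m a i).toNat, l : ℕ) : ℤ) * ε a)
          * (p⁻¹) ^ (∑ a : Fin K,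
              ((∑ l ∈ Finset.range (m a i).toNat, ∑ j ∈ Finset.range l, j : ℕ) : ℤ) * ε a)
          * (q⁻¹) ^ (∑ a : Fin K, ((∑ l ∈ Finset.range (m a i).toNat, l * l : ℕ) : ℤ) * ε a)
          * ∏ k : Fin n, x k ^ (∑ a : Fin K,
              m a k * (-(((∑ l ∈ Finset.range (m a i).toNat, l : ℕ) : ℤ) * ε a))) := by
          rw [Finset.prod_mul_distrib, Finset.prod_mul_distrib, Finset.prod_mul_distrib,
            ← zpow_finset_sum (neg_ne_zero.mpr (one_ne_zero : (1:ℂ) ≠ 0)),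
            ← zpow_finset_sum (inv_ne_zero hp0), ← zpow_finset_sum (inv_ne_zero hq),
            Finset.prod_comm]
          congr 1
          exact Finset.prod_congr rfl fun k _ => (zpow_finset_sum (hx k) _ _).symm
      _ = 1 := by
          rw [hT0, hS0, hU0]
          have hx1 : ∀ k ∈ (Finset.univ : Finset (Fin n)),
              x k ^ (∑ a : Fin K,
                m a k * (-(((∑ l ∈ Finset.range (m a i).toNat, l : ℕ) : ℤ) * ε a))) = 1 :=
            fun k _ => by rw [hE4 k, zpow_zero]
          rw [Finset.prod_congr rfl hx1]
          simp
  rw [step2, hone, one_mul]
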